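/- Let n > −1 and ν > −(n+1)/2. Then for all x > 0, ∫_0^x I_{ν+n}(t)/t^ν dt < (2(ν+n+1)/(n+1))·I_{ν+n+1}(x)/x^ν − ((2ν+n+1)/(n+1))·I_{ν+n+3}(x)/x^ν. -/

import Mathlib

open MeasureTheory Set Real

/-- Modified Bessel function of the first kind:
`I_ν(x) = Σ_{k=0}^∞ (x/2)^{ν+2k} / (k! Γ(ν+k+1))`. -/
noncomputable def besselI (ν x : ℝ) : ℝ :=
  ∑' k : ℕ, (x / 2) ^ (ν + 2 * (k : ℝ)) / ((Nat.factorial k : ℝ) * Real.Gamma (ν + (k : ℝ) + 1))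

/-- coefficient of the Bessel series -/
noncomputable def besco (μ : ℝ) (k : ℕ) : ℝ :=
  (1/2 : ℝ) ^ (μ + 2*(k:ℝ)) / ((Nat.factorial k : ℝ) * Real.Gamma (μ + (k:ℝ) + 1))

lemma besco_pos {μ : ℝ} (hμ : 0 < μ + 1) (k : ℕ) : 0 < besco μ k := by
  have hk : (0:ℝ) ≤ (k:ℝ) := Nat.cast_nonneg k
  have h1 : 0 < μ + (k:ℝ) + 1 := by linarith
  have := Real.Gamma_pos_of_pos h1
  have hf : (0:ℝ) < (Nat.factorial k : ℝ) := by positivity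
  unfold besco
  have h2 : (0:ℝ) < (1/2 : ℝ) ^ (μ + 2*(k:ℝ)) := Real.rpow_pos_of_pos (by norm_num) _
  positivity

lemma besselI_div_rpow (μ ν t : ℝ) (ht : 0 < t) :
    besselI μ t / t ^ ν = ∑' k : ℕ, besco μ k * t ^ (μ - ν + 2*(k:ℝ)) := by
  unfold besselI besco
  rw [← tsum_div_const]
  congr 1
  funext k
  have htν : (0:ℝ) < t ^ ν := Real.rpow_pos_of_pos ht ν
  have h1 : (t / 2 : ℝ) ^ (μ + 2*(k:ℝ)) = t ^ (μ + 2*(k:ℝ)) * (1/2:ℝ) ^ (μ + 2*(k:ℝ)) := by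
    rw [show (t/2 : ℝ) = t * (1/2) by ring, Real.mul_rpow ht.le (by norm_num)]
  have h2 : t ^ (μ + 2*(k:ℝ)) = t ^ ν * t ^ (μ - ν + 2*(k:ℝ)) := by
    rw [← Real.rpow_add ht]; ring_nf
  rw [h1, h2, show ∀ a b c d : ℝ, (a*b*c)/d/a = (b*c)/d*(a/a) from fun a b c d => by ring,
    div_self htν.ne', mul_one]
  ring

lemma summable_aux (μ : ℝ) (hμ : 0 < μ) (r : ℝ) (hr : 0 < r) :
    Summable (fun k : ℕ => r ^ k / ((Nat.factorial k : ℝ) * Real.Gamma (μ + (k:ℝ)))) := by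
  set f : ℕ → ℝ := fun k => r ^ k / ((Nat.factorial k : ℝ) * Real.Gamma (μ + (k:ℝ))) with hf
  have hgpos : ∀ k : ℕ, 0 < Real.Gamma (μ + (k:ℝ)) := by
    intro k
    have hk : (0:ℝ) ≤ (k:ℝ) := Nat.cast_nonneg k
    exact Real.Gamma_pos_of_pos (by linarith)
  have hpos : ∀ k : ℕ, 0 < f k := by
    intro k
    have := hgpos k
    have hfk : (0:ℝ) < (Nat.factorial k : ℝ) := by positivity
    positivity
  have key : ∀ k : ℕ, f (k+1) / f k = r / (((k:ℝ)+1)*(μ+(k:ℝ))) := by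
    intro k
    have hk : (0:ℝ) ≤ (k:ℝ) := Nat.cast_nonneg k
    have hμk : (0:ℝ) < μ + (k:ℝ) := by linarith
    have hg : Real.Gamma (μ + ((k:ℝ)+1)) = (μ+(k:ℝ)) * Real.Gamma (μ+(k:ℝ)) := by
      rw [show μ + ((k:ℝ)+1) = (μ+(k:ℝ)) + 1 by ring, Real.Gamma_add_one hμk.ne']
    have h1 : Real.Gamma (μ+(k:ℝ)) ≠ 0 := (hgpos k).ne'
    have h2 : ((Nat.factorial k : ℕ) : ℝ) ≠ 0 := by positivity
    simp only [hf]
    push_cast [Nat.factorial_succ]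
    rw [hg]
    field_simp
    ring
  apply summable_of_ratio_test_tendsto_lt_one (l := 0) zero_lt_one
    (Filter.Eventually.of_forall fun k => (hpos k).ne')
  have heq : (fun k : ℕ => ‖f (k+1)‖ / ‖f k‖) = fun k : ℕ => r / (((k:ℝ)+1)*(μ+(k:ℝ))) := by
    funext k
    rw [Real.norm_of_nonneg (hpos _).le, Real.norm_of_nonneg (hpos _).le, key]
  rw [heq]
  apply Filter.Tendsto.div_atTop tendsto_const_nhds
  apply Filter.Tendsto.atTop_mul_atTop₀
  · exact Filter.tendsto_atTop_add_const_right _ 1 tendsto_natCast_atTop_atTop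
  · exact Filter.tendsto_atTop_add_const_left _ μ tendsto_natCast_atTop_atTop

lemma besco_mul_rpow (μ s x : ℝ) (hx : 0 < x) (k : ℕ) :
    besco μ k * x ^ (s + 2*(k:ℝ)) =
      ((1/2:ℝ)^μ * x^s) * ((x^2/4)^k / ((Nat.factorial k : ℝ) * Real.Gamma ((μ+1) + (k:ℝ)))) := by
  unfold besco
  have h2k : (2*(k:ℝ)) = ((2*k : ℕ) : ℝ) := by push_cast; ring
  have e1 : (1/2:ℝ) ^ (μ + 2*(k:ℝ)) = (1/2:ℝ)^μ * ((1/4:ℝ))^k := by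
    rw [Real.rpow_add (by norm_num : (0:ℝ) < 1/2), h2k, Real.rpow_natCast, pow_mul]
    norm_num
  have e2 : x ^ (s + 2*(k:ℝ)) = x^s * (x^2)^k := by
    rw [Real.rpow_add hx, h2k, Real.rpow_natCast, pow_mul]
  have e3 : Real.Gamma (μ + (k:ℝ) + 1) = Real.Gamma ((μ+1) + (k:ℝ)) := by ring_nf
  rw [e1, e2, e3]
  simp only [div_pow, one_pow]
  ring

noncomputable def shiftf (g : ℕ → ℝ) : ℕ → ℝ
  | 0 => 0
  | (m+1) => g m

set_option maxHeartbeats 2000000 in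
theorem stmt_11 (ν n : ℝ) (hn : n > -1) (hν : ν > -(n + 1) / 2) :
    ∀ x : ℝ, 0 < x →
      (∫ t in (0 : ℝ)..x, besselI (ν + n) t / t ^ ν) <
        (2 * (ν + n + 1) / (n + 1)) * (besselI (ν + n + 1) x / x ^ ν)
          - ((2 * ν + n + 1) / (n + 1)) * (besselI (ν + n + 3) x / x ^ ν) := by
  intro x hx
  have hn1 : (0:ℝ) < n + 1 := by linarith
  have hα : (0:ℝ) < ν + n + 1 := by linarith
  have hβ : (0:ℝ) < 2*ν + n + 1 := by linarith
  have hx4 : (0:ℝ) < x^2/4 := by positivity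
  -- summability of the three basic series
  have hsum_d : Summable (fun k : ℕ => besco (ν+n+1) k * x ^ ((n+1) + 2*(k:ℝ))) := by
    refine ((summable_aux (ν+n+1+1) (by linarith) (x^2/4) hx4).mul_left
      ((1/2:ℝ)^(ν+n+1) * x^(n+1))).congr fun k => ?_
    exact (besco_mul_rpow (ν+n+1) (n+1) x hx k).symm
  have hsum_e : Summable (fun k : ℕ => besco (ν+n+3) k * x ^ ((n+3) + 2*(k:ℝ))) := by
    refine ((summable_aux (ν+n+3+1) (by linarith) (x^2/4) hx4).mul_left
      ((1/2:ℝ)^(ν+n+3) * x^(n+3))).congr fun k => ?_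
    exact (besco_mul_rpow (ν+n+3) (n+3) x hx k).symm
  have hsum_W : Summable (fun k : ℕ => besco (ν+n) k * x ^ ((n+1) + 2*(k:ℝ))) := by
    refine ((summable_aux (ν+n+1) (by linarith) (x^2/4) hx4).mul_left
      ((1/2:ℝ)^(ν+n) * x^(n+1))).congr fun k => ?_
    exact (besco_mul_rpow (ν+n) (n+1) x hx k).symm
  have hsum_e' : Summable (shiftf (fun m : ℕ => besco (ν+n+3) m * x ^ ((n+3) + 2*(m:ℝ)))) :=
    (summable_nat_add_iff 1).mp (hsum_e.congr fun k => rfl)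
  -- nonnegativity / positivity of terms
  have hWpos : ∀ k : ℕ, 0 < besco (ν+n) k * x ^ ((n+1) + 2*(k:ℝ)) := fun k =>
    mul_pos (besco_pos (by linarith) k) (Real.rpow_pos_of_pos hx _)
  have hden_pos : ∀ k : ℕ, (0:ℝ) < n + 2*(k:ℝ) + 1 := by
    intro k
    have : (0:ℝ) ≤ (k:ℝ) := Nat.cast_nonneg k
    linarith
  have hA_nonneg : ∀ k : ℕ, 0 ≤ besco (ν+n) k * x ^ ((n+1) + 2*(k:ℝ)) / (n + 2*(k:ℝ) + 1) :=
    fun k => le_of_lt (div_pos (hWpos k) (hden_pos k))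
  have hsum_A : Summable (fun k : ℕ =>
      besco (ν+n) k * x ^ ((n+1) + 2*(k:ℝ)) / (n + 2*(k:ℝ) + 1)) := by
    refine Summable.of_nonneg_of_le hA_nonneg (fun k => ?_) (hsum_W.div_const (n+1))
    have hk : (0:ℝ) ≤ (k:ℝ) := Nat.cast_nonneg k
    exact div_le_div_of_nonneg_left (hWpos k).le hn1 (by linarith)
  -- the integral equals the termwise-integrated series
  have hInt : ∀ k : ℕ, IntegrableOn
      (fun t : ℝ => besco (ν+n) k * t ^ (n + 2*(k:ℝ))) (Ioc 0 x) volume := by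
    intro k
    have hk : (0:ℝ) ≤ (k:ℝ) := Nat.cast_nonneg k
    have h1 : IntervalIntegrable (fun t : ℝ => t ^ (n + 2*(k:ℝ))) volume 0 x :=
      intervalIntegral.intervalIntegrable_rpow' (by linarith)
    exact (intervalIntegrable_iff_integrableOn_Ioc_of_le hx.le).mp (h1.const_mul _)
  have hval : ∀ k : ℕ, (∫ t in Ioc 0 x, besco (ν+n) k * t ^ (n + 2*(k:ℝ)))
      = besco (ν+n) k * x ^ ((n+1) + 2*(k:ℝ)) / (n + 2*(k:ℝ) + 1) := by
    intro k
    rw [← intervalIntegral.integral_of_le hx.le, intervalIntegral.integral_const_mul,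
      integral_rpow (Or.inl (by linarith [Nat.cast_nonneg (α := ℝ) k])),
      Real.zero_rpow (ne_of_gt (hden_pos k)),
      show x ^ (n + 2*(k:ℝ) + 1) = x ^ ((n+1) + 2*(k:ℝ)) from by
        rw [show n + 2*(k:ℝ) + 1 = (n+1) + 2*(k:ℝ) from by ring]]
    ring
  have hnormval : ∀ k : ℕ, (∫ t in Ioc 0 x, ‖besco (ν+n) k * t ^ (n + 2*(k:ℝ))‖)
      = besco (ν+n) k * x ^ ((n+1) + 2*(k:ℝ)) / (n + 2*(k:ℝ) + 1) := by
    intro k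
    rw [setIntegral_congr_fun measurableSet_Ioc
      (fun t ht => Real.norm_of_nonneg
        (mul_pos (besco_pos (by linarith : (0:ℝ) < (ν+n)+1) k)
          (Real.rpow_pos_of_pos ht.1 _)).le)]
    exact hval k
  have hLHS : (∫ t in (0:ℝ)..x, besselI (ν + n) t / t ^ ν)
      = ∑' k : ℕ, besco (ν+n) k * x ^ ((n+1) + 2*(k:ℝ)) / (n + 2*(k:ℝ) + 1) := by
    rw [intervalIntegral.integral_of_le hx.le]
    have hcong : (∫ t in Ioc 0 x, besselI (ν + n) t / t ^ ν)
        = ∫ t in Ioc 0 x, (∑' k : ℕ, besco (ν+n) k * t ^ (n + 2*(k:ℝ))) := by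
      refine setIntegral_congr_fun measurableSet_Ioc fun t ht => ?_
      rw [besselI_div_rpow (ν+n) ν t ht.1]
      congr 1
      funext k
      rw [add_sub_cancel_left]
    rw [hcong, ← MeasureTheory.integral_tsum_of_summable_integral_norm hInt
      (hsum_A.congr fun k => (hnormval k).symm)]
    exact tsum_congr hval
  -- rewrite the right-hand side as a single series
  have hRHS : (2 * (ν + n + 1) / (n + 1)) * (besselI (ν + n + 1) x / x ^ ν)
      - ((2 * ν + n + 1) / (n + 1)) * (besselI (ν + n + 3) x / x ^ ν)
      = ∑' k : ℕ, ((2*(ν+n+1)/(n+1)) * (besco (ν+n+1) k * x ^ ((n+1) + 2*(k:ℝ)))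
          - ((2*ν+n+1)/(n+1))
            * shiftf (fun m : ℕ => besco (ν+n+3) m * x ^ ((n+3) + 2*(m:ℝ))) k) := by
    rw [besselI_div_rpow (ν+n+1) ν x hx, besselI_div_rpow (ν+n+3) ν x hx]
    simp only [show ν+n+1-ν = n+1 from by ring, show ν+n+3-ν = n+3 from by ring]
    have htshift : (∑' k : ℕ, besco (ν+n+3) k * x ^ ((n+3) + 2*(k:ℝ)))
        = ∑' k : ℕ, shiftf (fun m : ℕ => besco (ν+n+3) m * x ^ ((n+3) + 2*(m:ℝ))) k := by
      rw [Summable.tsum_eq_zero_add hsum_e']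
      rw [show shiftf (fun m : ℕ => besco (ν+n+3) m * x ^ ((n+3) + 2*(m:ℝ))) 0 = 0 from rfl,
        zero_add]
      exact tsum_congr fun k => rfl
    rw [htshift, ← tsum_mul_left, ← tsum_mul_left,
      ← Summable.tsum_sub (hsum_d.mul_left _) (hsum_e'.mul_left _)]
  rw [hLHS, hRHS]
  -- termwise comparison
  have hzero : besco (ν+n) 0 * x ^ ((n+1) + 2*((0:ℕ):ℝ)) / (n + 2*((0:ℕ):ℝ) + 1)
      = (2*(ν+n+1)/(n+1)) * (besco (ν+n+1) 0 * x ^ ((n+1) + 2*((0:ℕ):ℝ)))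
        - ((2*ν+n+1)/(n+1))
          * shiftf (fun m : ℕ => besco (ν+n+3) m * x ^ ((n+3) + 2*(m:ℝ))) 0 := by
    rw [show shiftf (fun m : ℕ => besco (ν+n+3) m * x ^ ((n+3) + 2*(m:ℝ))) 0 = 0 from rfl,
      mul_zero, sub_zero]
    simp only [besco, Nat.cast_zero, mul_zero, add_zero, Nat.factorial_zero, Nat.cast_one,
      one_mul]
    have hg : Real.Gamma (ν+n+1+1) = (ν+n+1) * Real.Gamma (ν+n+1) := Real.Gamma_add_one hα.ne'
    have hhalf : (1/2:ℝ) ^ (ν+n+1) = (1/2:ℝ)^(ν+n) * (1/2) := by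
      rw [Real.rpow_add (by norm_num : (0:ℝ) < 1/2), Real.rpow_one]
    rw [hg, hhalf]
    have hΓ : Real.Gamma (ν+n+1) ≠ 0 := (Real.Gamma_pos_of_pos hα).ne'
    field_simp
  have hstrict : ∀ m : ℕ,
      besco (ν+n) (m+1) * x ^ ((n+1) + 2*(((m+1):ℕ):ℝ)) / (n + 2*(((m+1):ℕ):ℝ) + 1)
      < (2*(ν+n+1)/(n+1)) * (besco (ν+n+1) (m+1) * x ^ ((n+1) + 2*(((m+1):ℕ):ℝ)))
        - ((2*ν+n+1)/(n+1)) * (besco (ν+n+3) m * x ^ ((n+3) + 2*((m:ℕ):ℝ))) := by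
    intro m
    have hm0 : (0:ℝ) ≤ (m:ℝ) := Nat.cast_nonneg m
    have hG : (0:ℝ) < Real.Gamma (ν+n+(m:ℝ)+2) := Real.Gamma_pos_of_pos (by linarith)
    have hF : (0:ℝ) < (Nat.factorial m : ℝ) := by positivity
    have hP : (0:ℝ) < (1/2:ℝ) ^ (ν+n+2*(m:ℝ)+2) := Real.rpow_pos_of_pos (by norm_num) _
    have hX : (0:ℝ) < x ^ (n+2*(m:ℝ)+3) := Real.rpow_pos_of_pos hx _
    have h1 : (0:ℝ) < (m:ℝ)+1 := by linarith
    have h2 : (0:ℝ) < ν+n+(m:ℝ)+2 := by linarith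
    have h3 : (0:ℝ) < ν+n+(m:ℝ)+3 := by linarith
    have h4 : (0:ℝ) < n+2*(m:ℝ)+3 := by linarith
    have hg1 : Real.Gamma (ν+n+(((m+1):ℕ):ℝ)+1) = Real.Gamma (ν+n+(m:ℝ)+2) := by
      congr 1; push_cast; ring
    have hg2 : Real.Gamma (ν+n+1+(((m+1):ℕ):ℝ)+1)
        = (ν+n+(m:ℝ)+2) * Real.Gamma (ν+n+(m:ℝ)+2) := by
      push_cast
      rw [show ν+n+1+((m:ℝ)+1)+1 = (ν+n+(m:ℝ)+2)+1 from by ring, Real.Gamma_add_one h2.ne']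
    have hg3 : Real.Gamma (ν+n+3+(m:ℝ)+1)
        = (ν+n+(m:ℝ)+3) * ((ν+n+(m:ℝ)+2) * Real.Gamma (ν+n+(m:ℝ)+2)) := by
      rw [show ν+n+3+(m:ℝ)+1 = ((ν+n+(m:ℝ)+2)+1)+1 from by ring,
        Real.Gamma_add_one (by linarith : (0:ℝ) < ν+n+(m:ℝ)+2+1).ne',
        Real.Gamma_add_one h2.ne']
      ring
    have hp1 : (1/2:ℝ) ^ (ν+n+2*(((m+1):ℕ):ℝ)) = (1/2:ℝ) ^ (ν+n+2*(m:ℝ)+2) := by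
      congr 1; push_cast; ring
    have hp2 : (1/2:ℝ) ^ (ν+n+1+2*(((m+1):ℕ):ℝ)) = (1/2:ℝ) ^ (ν+n+2*(m:ℝ)+2) * (1/2) := by
      push_cast
      rw [show ν+n+1+2*((m:ℝ)+1) = (ν+n+2*(m:ℝ)+2)+1 from by ring,
        Real.rpow_add (by norm_num : (0:ℝ) < 1/2), Real.rpow_one]
    have hp3 : (1/2:ℝ) ^ (ν+n+3+2*(m:ℝ)) = (1/2:ℝ) ^ (ν+n+2*(m:ℝ)+2) * (1/2) := by
      rw [show ν+n+3+2*(m:ℝ) = (ν+n+2*(m:ℝ)+2)+1 from by ring,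
        Real.rpow_add (by norm_num : (0:ℝ) < 1/2), Real.rpow_one]
    have hq1 : x ^ ((n+1) + 2*(((m+1):ℕ):ℝ)) = x ^ (n+2*(m:ℝ)+3) := by
      congr 1; push_cast; ring
    have hq2 : x ^ ((n+3) + 2*(m:ℝ)) = x ^ (n+2*(m:ℝ)+3) := by
      congr 1; ring
    have hfac : ((Nat.factorial (m+1) : ℕ) : ℝ) = ((m:ℝ)+1) * (Nat.factorial m : ℝ) := by
      push_cast [Nat.factorial_succ]; ring
    have hkey : (1:ℝ)/(((m:ℝ)+1)*(n+2*(m:ℝ)+3))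
        < (ν+n+1)/((n+1)*(((m:ℝ)+1)*(ν+n+(m:ℝ)+2)))
          - (2*ν+n+1)/(2*(n+1)*((ν+n+(m:ℝ)+2)*(ν+n+(m:ℝ)+3))) := by
      rw [← sub_pos]
      have heq : (ν+n+1)/((n+1)*(((m:ℝ)+1)*(ν+n+(m:ℝ)+2)))
          - (2*ν+n+1)/(2*(n+1)*((ν+n+(m:ℝ)+2)*(ν+n+(m:ℝ)+3)))
          - 1/(((m:ℝ)+1)*(n+2*(m:ℝ)+3))
          = (((m:ℝ)+1)*((2*ν+n+1)^2 + 2*(2*ν+n+1)))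
            / (2*(n+1)*(((m:ℝ)+1)*((ν+n+(m:ℝ)+2)*((ν+n+(m:ℝ)+3)*(n+2*(m:ℝ)+3))))) := by
        have hA : (0:ℝ) < (n+1)*(((m:ℝ)+1)*(ν+n+(m:ℝ)+2)) := mul_pos hn1 (mul_pos h1 h2)
        have hB : (0:ℝ) < 2*(n+1)*((ν+n+(m:ℝ)+2)*(ν+n+(m:ℝ)+3)) :=
          mul_pos (mul_pos two_pos hn1) (mul_pos h2 h3)
        have hC : (0:ℝ) < ((m:ℝ)+1)*(n+2*(m:ℝ)+3) := mul_pos h1 h4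
        have hD : (0:ℝ) < 2*(n+1)*(((m:ℝ)+1)*((ν+n+(m:ℝ)+2)*((ν+n+(m:ℝ)+3)*(n+2*(m:ℝ)+3)))) :=
          mul_pos (mul_pos two_pos hn1) (mul_pos h1 (mul_pos h2 (mul_pos h3 h4)))
        rw [div_sub_div _ _ hA.ne' hB.ne', div_sub_div _ _ (mul_pos hA hB).ne' hC.ne',
          div_eq_div_iff (mul_pos (mul_pos hA hB) hC).ne' hD.ne']
        ring
      rw [heq]
      apply div_pos
      · have hb2 : (0:ℝ) < (2*ν+n+1)^2 + 2*(2*ν+n+1) := by nlinarith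
        exact mul_pos h1 hb2
      · exact mul_pos (mul_pos two_pos hn1) (mul_pos h1 (mul_pos h2 (mul_pos h3 h4)))
    calc besco (ν+n) (m+1) * x ^ ((n+1) + 2*(((m+1):ℕ):ℝ)) / (n + 2*(((m+1):ℕ):ℝ) + 1)
        = ((1/2:ℝ)^(ν+n+2*(m:ℝ)+2) * x^(n+2*(m:ℝ)+3)
            / ((Nat.factorial m : ℝ) * Real.Gamma (ν+n+(m:ℝ)+2)))
            * (1/(((m:ℝ)+1)*(n+2*(m:ℝ)+3))) := by
          simp only [besco]
          rw [hg1, hp1, hq1, hfac,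
            show n + 2*(((m+1):ℕ):ℝ) + 1 = n + 2*(m:ℝ)+3 from by push_cast; ring]
          field_simp [hF.ne', hG.ne', h1.ne', h2.ne', h3.ne', h4.ne']
      _ < ((1/2:ℝ)^(ν+n+2*(m:ℝ)+2) * x^(n+2*(m:ℝ)+3)
            / ((Nat.factorial m : ℝ) * Real.Gamma (ν+n+(m:ℝ)+2)))
            * ((ν+n+1)/((n+1)*(((m:ℝ)+1)*(ν+n+(m:ℝ)+2)))
              - (2*ν+n+1)/(2*(n+1)*((ν+n+(m:ℝ)+2)*(ν+n+(m:ℝ)+3)))) :=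
          mul_lt_mul_of_pos_left hkey (div_pos (mul_pos hP hX) (mul_pos hF hG))
      _ = (2*(ν+n+1)/(n+1)) * (besco (ν+n+1) (m+1) * x ^ ((n+1) + 2*(((m+1):ℕ):ℝ)))
          - ((2*ν+n+1)/(n+1)) * (besco (ν+n+3) m * x ^ ((n+3) + 2*((m:ℕ):ℝ))) := by
          simp only [besco]
          rw [hg2, hg3, hp2, hp3, hq1, hq2, hfac]
          field_simp [hF.ne', hG.ne', h1.ne', h2.ne', h3.ne', h4.ne', hn1.ne']
  refine Summable.tsum_lt_tsum_of_nonneg hA_nonneg (fun k => ?_) (hstrict 0) 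
    ((hsum_d.mul_left _).sub (hsum_e'.mul_left _))
  match k with
  | 0 => exact le_of_eq hzero
  | (m+1) => exact le_of_lt (hstrict m)
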